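/- For every probability vector w on [n] and bandit instance μ with unique best arm 1, inf over alternative instances λ with best arm different from 1 of ∑_{i=1}^n w_i d(μ_i, λ_i) equals min over i ≠ 1 of (w₁ + w_i)·I_{w₁/(w₁+w_i)}(μ₁, μ_i), where I_c(μ,μ') = c·d(μ, cμ+(1−c)μ') + (1−c)·d(μ', cμ+(1−c)μ'). -/

import Mathlib

open intervalIntegral MeasureTheory

section Aux

variable (V : ℝ → ℝ) (hVpos : ∀ z, 0 < V z) (hVc : Continuous V)
variable (d : ℝ → ℝ → ℝ) (hd : ∀ x y, d x y = ∫ z in x..y, (z - x) / V z)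

omit hVpos hVc in
lemma auxCont (hVpos : ∀ z, 0 < V z) (hVc : Continuous V) (a : ℝ) :
    Continuous fun z => (z - a) / V z :=
  (continuous_id.sub continuous_const).div hVc fun z => (hVpos z).ne'

omit hVpos hVc in
lemma auxIntble (hVpos : ∀ z, 0 < V z) (hVc : Continuous V) (a x y : ℝ) :
    IntervalIntegrable (fun z => (z - a) / V z) volume x y :=
  (auxCont V hVpos hVc a).intervalIntegrable x y

set_option linter.unusedSectionVars false

include hVpos hVc hd

lemma d_self (a : ℝ) : d a a = 0 := by
  rw [hd, intervalIntegral.integral_same]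

lemma d_nonneg (a t : ℝ) : 0 ≤ d a t := by
  rw [hd]
  rcases le_total a t with h | h
  · refine intervalIntegral.integral_nonneg h fun u hu => ?_
    exact div_nonneg (by linarith [hu.1]) (hVpos u).le
  · rw [intervalIntegral.integral_symm]
    have h0 : (∫ z in t..a, (z - a) / V z) ≤ 0 := by
      have := intervalIntegral.integral_nonneg (f := fun z => -((z - a) / V z))
        (μ := volume) h (fun u hu => by
          have : (u - a) / V u ≤ 0 :=
            div_nonpos_of_nonpos_of_nonneg (by linarith [hu.2]) (hVpos u).le
          linarith)
      rw [intervalIntegral.integral_neg] at this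
      linarith
    linarith

lemma d_sub (a s t : ℝ) : d a t - d a s = ∫ z in s..t, (z - a) / V z := by
  rw [hd, hd]
  exact intervalIntegral.integral_interval_sub_left (auxIntble V hVpos hVc a a t)
    (auxIntble V hVpos hVc a a s)

lemma d_anti (a s t : ℝ) (h1 : s ≤ t) (h2 : t ≤ a) : d a t ≤ d a s := by
  have h := d_sub V hVpos hVc d hd a s t
  have h0 : (∫ z in s..t, (z - a) / V z) ≤ 0 := by
    have := intervalIntegral.integral_nonneg (f := fun z => -((z - a) / V z))
      (μ := volume) h1 (fun u hu => by
        have : (u - a) / V u ≤ 0 :=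
          div_nonpos_of_nonpos_of_nonneg (by linarith [hu.2]) (hVpos u).le
        linarith)
    rw [intervalIntegral.integral_neg] at this
    linarith
  linarith

lemma d_mono (a s t : ℝ) (h1 : a ≤ s) (h2 : s ≤ t) : d a s ≤ d a t := by
  have h := d_sub V hVpos hVc d hd a s t
  have h0 : 0 ≤ ∫ z in s..t, (z - a) / V z :=
    intervalIntegral.integral_nonneg h2 fun u hu =>
      div_nonneg (by linarith [hu.1]) (hVpos u).le
  linarith

lemma d_cont (a : ℝ) : Continuous fun t => d a t := by
  have : (fun t => d a t) = fun t => ∫ z in a..t, (z - a) / V z := by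
    funext t; exact hd a t
  rw [this]
  exact intervalIntegral.continuous_primitive
    (fun x y => auxIntble V hVpos hVc a x y) a

/-- Key identity: weighted divergence decomposition around the weighted mean. -/
lemma d_key (u v a b t : ℝ) (huv : u + v ≠ 0) :
    u * d a t + v * d b t =
      u * d a ((u * a + v * b) / (u + v)) + v * d b ((u * a + v * b) / (u + v)) +
        (u + v) * d ((u * a + v * b) / (u + v)) t := by
  set m := (u * a + v * b) / (u + v) with hm
  have hmv : u * a + v * b = (u + v) * m := by
    rw [hm]; field_simp
  have ea : d a t - d a m = ∫ z in m..t, (z - a) / V z := d_sub V hVpos hVc d hd a m t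
  have eb : d b t - d b m = ∫ z in m..t, (z - b) / V z := d_sub V hVpos hVc d hd b m t
  have em : d m t - d m m = ∫ z in m..t, (z - m) / V z := d_sub V hVpos hVc d hd m m t
  rw [d_self V hVpos hVc d hd m, sub_zero] at em
  have comb : u * (∫ z in m..t, (z - a) / V z) + v * (∫ z in m..t, (z - b) / V z)
      = (u + v) * ∫ z in m..t, (z - m) / V z := by
    rw [← intervalIntegral.integral_const_mul, ← intervalIntegral.integral_const_mul,
      ← intervalIntegral.integral_add
        ((auxIntble V hVpos hVc a m t).const_mul u)
        ((auxIntble V hVpos hVc b m t).const_mul v),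
      ← intervalIntegral.integral_const_mul]
    refine intervalIntegral.integral_congr fun z hz => ?_
    have hV := (hVpos z).ne'
    field_simp
    nlinarith [hmv]
  linear_combination u * ea + v * eb - (u + v) * em + comb

/-- Core lower bound: for x ≤ y the weighted cost is at least the value at the mean. -/
lemma d_lb (u v a b x y : ℝ) (hu : 0 ≤ u) (hv : 0 ≤ v) (huv : 0 < u + v)
    (hab : b < a) (hxy : x ≤ y) :
    u * d a ((u * a + v * b) / (u + v)) + v * d b ((u * a + v * b) / (u + v)) ≤
      u * d a x + v * d b y := by
  set m := (u * a + v * b) / (u + v) with hm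
  have hbm : b ≤ m := by
    rw [hm, le_div_iff₀ huv]; nlinarith
  have hma : m ≤ a := by
    rw [hm, div_le_iff₀ huv]; nlinarith
  have key := fun t => d_key V hVpos hVc d hd u v a b t huv.ne'
  rcases le_or_gt m x with hmx | hxm
  · -- m ≤ x ≤ y
    have h1 : d b x ≤ d b y := d_mono V hVpos hVc d hd b x y (hbm.trans hmx) hxy
    have h2 := key x
    have h3 := mul_nonneg huv.le (d_nonneg V hVpos hVc d hd m x)
    nlinarith
  rcases le_or_gt y m with hym | hmy
  · -- x ≤ y ≤ m
    have h1 : d a y ≤ d a x := d_anti V hVpos hVc d hd a x y hxy (hym.trans hma)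
    have h2 := key y
    have h3 := mul_nonneg huv.le (d_nonneg V hVpos hVc d hd m y)
    nlinarith
  · -- x ≤ m ≤ y
    have h1 : d a m ≤ d a x := d_anti V hVpos hVc d hd a x m hxm.le hma
    have h2 : d b m ≤ d b y := d_mono V hVpos hVc d hd b m y hbm hmy.le
    nlinarith

end Aux

theorem stmt9 (n : ℕ) [NeZero n] (hn : 2 ≤ n) (V : ℝ → ℝ) (hVpos : ∀ z, 0 < V z)
    (hVc : Continuous V)
    (d : ℝ → ℝ → ℝ) (hd : ∀ x y, d x y = ∫ z in x..y, (z - x) / V z)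
    (μ : Fin n → ℝ) (hμ : ∀ i, i ≠ 0 → μ i < μ 0)
    (w : Fin n → ℝ) (hw0 : ∀ i, 0 ≤ w i) (hw1 : ∑ i, w i = 1) :
    sInf {v : ℝ | ∃ lam : Fin n → ℝ,
        (∃ i, i ≠ 0 ∧ lam 0 < lam i) ∧ v = ∑ i, w i * d (μ i) (lam i)} =
      ⨅ i : {i : Fin n // i ≠ 0},
        (w 0 + w i.1) *
          ((w 0 / (w 0 + w i.1)) *
              d (μ 0) ((w 0 / (w 0 + w i.1)) * μ 0 + (1 - w 0 / (w 0 + w i.1)) * μ i.1) +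
            (1 - w 0 / (w 0 + w i.1)) *
              d (μ i.1) ((w 0 / (w 0 + w i.1)) * μ 0 + (1 - w 0 / (w 0 + w i.1)) * μ i.1)) := by
  have dself := d_self V hVpos hVc d hd
  have dnonneg := d_nonneg V hVpos hVc d hd
  set S : Set ℝ := {v : ℝ | ∃ lam : Fin n → ℝ,
      (∃ i, i ≠ 0 ∧ lam 0 < lam i) ∧ v = ∑ i, w i * d (μ i) (lam i)} with hS
  set F : {i : Fin n // i ≠ 0} → ℝ := fun i =>
    (w 0 + w i.1) *
      ((w 0 / (w 0 + w i.1)) *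
          d (μ 0) ((w 0 / (w 0 + w i.1)) * μ 0 + (1 - w 0 / (w 0 + w i.1)) * μ i.1) +
        (1 - w 0 / (w 0 + w i.1)) *
          d (μ i.1) ((w 0 / (w 0 + w i.1)) * μ 0 + (1 - w 0 / (w 0 + w i.1)) * μ i.1))
    with hF
  have hone : (1 : Fin n) ≠ 0 := by
    have : ((1 : Fin n) : ℕ) = 1 % n := rfl
    have h1 : ((1 : Fin n) : ℕ) = 1 := by rw [this, Nat.mod_eq_of_lt (by omega)]
    intro h
    rw [Fin.ext_iff, h1] at h
    simp at h
  haveI : Nonempty {i : Fin n // i ≠ 0} := ⟨⟨1, hone⟩⟩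
  -- F i in "w0 d + wi d" form when w0 + wi ≠ 0
  have hFform : ∀ (i : Fin n) (hi : i ≠ 0), w 0 + w i ≠ 0 →
      F ⟨i, hi⟩ = w 0 * d (μ 0) ((w 0 * μ 0 + w i * μ i) / (w 0 + w i)) +
        w i * d (μ i) ((w 0 * μ 0 + w i * μ i) / (w 0 + w i)) := by
    intro i hi hs
    have hpt : (w 0 / (w 0 + w i)) * μ 0 + (1 - w 0 / (w 0 + w i)) * μ i
        = (w 0 * μ 0 + w i * μ i) / (w 0 + w i) := by
      field_simp
      ring
    rw [hF]
    simp only [hpt]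
    have h1 : (w 0 + w i) * (w 0 / (w 0 + w i)) = w 0 := by field_simp
    have h2 : (w 0 + w i) * (1 - w 0 / (w 0 + w i)) = w i := by field_simp; ring
    rw [mul_add, ← mul_assoc, ← mul_assoc, h1, h2]
  -- sum reduction for lam equal to μ off {0, i}
  have hsum : ∀ (i : Fin n), i ≠ 0 → ∀ lam : Fin n → ℝ,
      (∀ j, j ≠ 0 → j ≠ i → lam j = μ j) →
      ∑ j, w j * d (μ j) (lam j) = w 0 * d (μ 0) (lam 0) + w i * d (μ i) (lam i) := by
    intro i hi lam hlam
    rw [← Finset.sum_subset (Finset.subset_univ ({0, i} : Finset (Fin n)))]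
    · rw [Finset.sum_pair (Ne.symm hi)]
    · intro j _ hj
      simp only [Finset.mem_insert, Finset.mem_singleton, not_or] at hj
      rw [hlam j hj.1 hj.2, dself, mul_zero]
  have hSnonneg : ∀ v ∈ S, 0 ≤ v := by
    rintro v ⟨lam, _, rfl⟩
    exact Finset.sum_nonneg fun j _ => mul_nonneg (hw0 j) (dnonneg _ _)
  have hSbdd : BddBelow S := ⟨0, hSnonneg⟩
  have hSne : S.Nonempty := by
    refine ⟨_, fun j => if j = 0 then (0 : ℝ) else 1, ⟨1, hone, by simp [hone]⟩, rfl⟩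
  have hFnonneg : ∀ i, 0 ≤ F i := by
    rintro ⟨i, hi⟩
    rcases eq_or_ne (w 0 + w i) 0 with hs | hs
    · rw [hF]; simp only [hs, zero_mul]; exact le_refl 0
    · rw [hFform i hi hs]
      exact add_nonneg (mul_nonneg (hw0 0) (dnonneg _ _)) (mul_nonneg (hw0 i) (dnonneg _ _))
  have hFbdd : BddBelow (Set.range F) := ⟨0, by rintro x ⟨i, rfl⟩; exact hFnonneg i⟩
  apply le_antisymm
  · -- sInf S ≤ ⨅ F
    refine le_ciInf fun i => ?_
    obtain ⟨i, hi⟩ := i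
    rcases eq_or_ne (w 0 + w i) 0 with hs | hs
    · -- degenerate: w 0 = w i = 0
      have hw00 : w 0 = 0 := by have := hw0 0; have := hw0 i; linarith
      have hFi : F ⟨i, hi⟩ = 0 := by rw [hF]; simp [hs]
      rw [hFi]
      refine csInf_le hSbdd ?_
      refine ⟨fun j => if j = 0 then μ i - 1 else μ j, ⟨i, hi, by simp [hi]⟩, ?_⟩
      rw [hsum i hi _ (fun j hj _ => by simp [hj])]
      simp [hi, hw00, dself]
    · -- nondegenerate: take lam 0 = m, lam i = t > m, let t → m⁺
      have hspos : 0 < w 0 + w i := lt_of_le_of_ne (by have := hw0 0; have := hw0 i; linarith) (Ne.symm hs)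
      set m : ℝ := (w 0 * μ 0 + w i * μ i) / (w 0 + w i) with hm
      rw [hFform i hi hs]
      have hcont : Filter.Tendsto (fun t => w 0 * d (μ 0) m + w i * d (μ i) t)
          (nhdsWithin m (Set.Ioi m)) (nhds (w 0 * d (μ 0) m + w i * d (μ i) m)) := by
        have : Continuous fun t => w 0 * d (μ 0) m + w i * d (μ i) t :=
          continuous_const.add (continuous_const.mul (d_cont V hVpos hVc d hd (μ i)))
        exact (this.tendsto m).mono_left nhdsWithin_le_nhds
      refine ge_of_tendsto hcont ?_
      filter_upwards [self_mem_nhdsWithin] with t ht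
      have htm : m < t := ht
      refine csInf_le hSbdd ?_
      refine ⟨fun j => if j = 0 then m else if j = i then t else μ j,
        ⟨i, hi, by simp [hi, htm]⟩, ?_⟩
      rw [hsum i hi _ (fun j hj1 hj2 => by simp [hj1, hj2])]
      simp [hi]
  · -- ⨅ F ≤ sInf S
    refine le_csInf hSne ?_
    rintro v ⟨lam, ⟨i, hi, hlt⟩, rfl⟩
    refine le_trans (ciInf_le hFbdd ⟨i, hi⟩) ?_
    have hdrop : w 0 * d (μ 0) (lam 0) + w i * d (μ i) (lam i) ≤
        ∑ j, w j * d (μ j) (lam j) := by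
      have hp : ∑ j ∈ ({0, i} : Finset (Fin n)), w j * d (μ j) (lam j)
          = w 0 * d (μ 0) (lam 0) + w i * d (μ i) (lam i) :=
        Finset.sum_pair (Ne.symm hi)
      rw [← hp]
      exact Finset.sum_le_sum_of_subset_of_nonneg (Finset.subset_univ _)
        (fun j _ _ => mul_nonneg (hw0 j) (dnonneg _ _))
    refine le_trans ?_ hdrop
    rcases eq_or_ne (w 0 + w i) 0 with hs | hs
    · have hFi : F ⟨i, hi⟩ = 0 := by rw [hF]; simp [hs]
      rw [hFi]
      exact add_nonneg (mul_nonneg (hw0 0) (dnonneg _ _)) (mul_nonneg (hw0 i) (dnonneg _ _))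
    · have hspos : 0 < w 0 + w i := lt_of_le_of_ne (by have := hw0 0; have := hw0 i; linarith) (Ne.symm hs)
      rw [hFform i hi hs]
      exact d_lb V hVpos hVc d hd (w 0) (w i) (μ 0) (μ i) (lam 0) (lam i)
        (hw0 0) (hw0 i) hspos (hμ i hi) hlt.le
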